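/- Let G = (ℤ × ℤ) ⋊ C₂ be the semidirect product of ℤ × ℤ by the cyclic group C₂ of order 2, where the nontrivial element of C₂ acts by swapping the two coordinates of ℤ × ℤ. Then the abelianization of G is isomorphic to ℤ × (ℤ/2ℤ); in particular the first Betti number of G (the rank of its abelianization) equals 1. -/

import Mathlib

/-- The order-2 automorphism of `Multiplicative (ℤ × ℤ)` swapping the two coordinates. -/
def swapAut : MulAut (Multiplicative (ℤ × ℤ)) :=
  AddEquiv.toMultiplicative (AddEquiv.prodComm : ℤ × ℤ ≃+ ℤ × ℤ)

/-- The action of `ℤ/2` on `ℤ × ℤ` in which the nontrivial element acts by swapping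
the two coordinates. -/
def swapAction : Multiplicative (ZMod 2) →* MulAut (Multiplicative (ℤ × ℤ)) :=
  AddMonoidHom.toMultiplicativeLeft
    (ZMod.lift 2
      ⟨zmultiplesHom (Additive (MulAut (Multiplicative (ℤ × ℤ)))) (Additive.ofMul swapAut), by
        show (2 : ℤ) • Additive.ofMul swapAut = 0
        rw [two_zsmul, ← ofMul_mul]
        rfl⟩)

/-- The abelianization of the semidirect product `(ℤ × ℤ) ⋊ (ℤ/2)`, where the nontrivial
element of `ℤ/2` acts by swapping the coordinates, is isomorphic to `ℤ × ℤ/2`;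
in particular the first Betti number of this semidirect product is 1. -/
abbrev Gp := SemidirectProduct (Multiplicative (ℤ × ℤ)) (Multiplicative (ZMod 2)) swapAction

def f1 : Multiplicative (ℤ × ℤ) →* Multiplicative ℤ × Multiplicative (ZMod 2) where
  toFun x := (Multiplicative.ofAdd (x.toAdd.1 + x.toAdd.2), 1)
  map_one' := by ext <;> simp
  map_mul' x y := by
    refine Prod.ext ?_ (by simp)
    show Multiplicative.ofAdd _ = Multiplicative.ofAdd _ * Multiplicative.ofAdd _
    rw [← ofAdd_add]
    congr 1
    show (x.toAdd + y.toAdd).1 + (x.toAdd + y.toAdd).2 = _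
    simp [Prod.fst_add, Prod.snd_add]; ring

lemma zmod2_cases (g : Multiplicative (ZMod 2)) :
    g = Multiplicative.ofAdd 0 ∨ g = Multiplicative.ofAdd 1 := by
  revert g; decide

lemma f1_swap (g : Multiplicative (ZMod 2)) (x : Multiplicative (ℤ × ℤ)) :
    f1 (swapAction g x) = f1 x := by
  rcases zmod2_cases g with h | h <;> subst h
  · rfl
  · show f1 (swapAut x) = f1 x
    refine Prod.ext ?_ rfl
    show Multiplicative.ofAdd (x.toAdd.2 + x.toAdd.1) = _
    rw [add_comm]; rfl

def fG : Gp →* Multiplicative ℤ × Multiplicative (ZMod 2) :=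
  SemidirectProduct.lift f1 (MonoidHom.inr _ _) (by
    intro g
    refine MonoidHom.ext fun x => ?_
    show f1 (swapAction g x) = MulAut.conj _ (f1 x)
    rw [MulAut.conj_apply, mul_comm, inv_mul_cancel_left, f1_swap])

noncomputable def F : Abelianization Gp →* Multiplicative ℤ × Multiplicative (ZMod 2) :=
  Abelianization.lift fG

def eElt : Abelianization Gp :=
  Abelianization.of (SemidirectProduct.inl (Multiplicative.ofAdd ((1, 0) : ℤ × ℤ)))

def tElt : Abelianization Gp :=
  Abelianization.of (SemidirectProduct.inr (Multiplicative.ofAdd (1 : ZMod 2)))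

lemma tElt_sq : tElt * tElt = 1 := by
  unfold tElt
  rw [← map_mul, ← map_mul]
  have : (Multiplicative.ofAdd (1 : ZMod 2)) * (Multiplicative.ofAdd 1) = 1 := by decide
  rw [this, map_one, map_one]

def g2 : Multiplicative (ZMod 2) →* Abelianization Gp :=
  AddMonoidHom.toMultiplicativeLeft
    (ZMod.lift 2
      ⟨zmultiplesHom (Additive (Abelianization Gp)) (Additive.ofMul tElt), by
        show (2 : ℤ) • Additive.ofMul tElt = 0
        rw [two_zsmul, ← ofMul_mul, tElt_sq]; rfl⟩)

noncomputable def gmap : Multiplicative ℤ × Multiplicative (ZMod 2) →* Abelianization Gp :=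
  (zpowersHom _ eElt).coprod g2

lemma of_inl_swap (x : Multiplicative (ℤ × ℤ)) :
    Abelianization.of (SemidirectProduct.inl (swapAut x) : Gp) =
      Abelianization.of (SemidirectProduct.inl x) := by
  have h : (SemidirectProduct.inl (swapAction (Multiplicative.ofAdd (1 : ZMod 2)) x) : Gp) =
      SemidirectProduct.inr (Multiplicative.ofAdd (1 : ZMod 2)) * SemidirectProduct.inl x *
        (SemidirectProduct.inr (Multiplicative.ofAdd (1 : ZMod 2)))⁻¹ :=
    SemidirectProduct.inl_aut _ _
  have h2 : swapAction (Multiplicative.ofAdd (1 : ZMod 2)) x = swapAut x := rfl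
  rw [h2] at h
  rw [h, map_mul, map_mul, map_inv, mul_comm, inv_mul_cancel_left]

lemma of_inl_eq (a b : ℤ) :
    Abelianization.of (SemidirectProduct.inl (Multiplicative.ofAdd ((a, b) : ℤ × ℤ)) : Gp) =
      eElt ^ (a + b) := by
  have pow1 : ∀ c : ℤ, (Multiplicative.ofAdd ((1, 0) : ℤ × ℤ)) ^ c =
      Multiplicative.ofAdd ((c, 0) : ℤ × ℤ) := by
    intro c
    rw [← ofAdd_zsmul]
    congr 1
    simp [Prod.smul_def]
  have hb : Abelianization.of (SemidirectProduct.inl (Multiplicative.ofAdd ((0, b) : ℤ × ℤ)) : Gp)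
      = eElt ^ b := by
    have : (Multiplicative.ofAdd ((0, b) : ℤ × ℤ)) = swapAut (Multiplicative.ofAdd ((b, 0) : ℤ × ℤ)) := rfl
    rw [this, of_inl_swap, ← pow1, map_zpow, map_zpow]; rfl
  have split : (Multiplicative.ofAdd ((a, b) : ℤ × ℤ)) =
      Multiplicative.ofAdd ((a, 0) : ℤ × ℤ) * Multiplicative.ofAdd ((0, b) : ℤ × ℤ) := by
    rw [← ofAdd_add]; congr 1; simp
  rw [split, map_mul, map_mul, hb, ← pow1, map_zpow, map_zpow, zpow_add]; rfl

lemma g2_ofAdd_one : g2 (Multiplicative.ofAdd (1 : ZMod 2)) = tElt := rfl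

lemma g2_eq (c : Multiplicative (ZMod 2)) :
    g2 c = Abelianization.of (SemidirectProduct.inr c : Gp) := by
  rcases zmod2_cases c with h | h <;> subst h
  · rw [show (Multiplicative.ofAdd (0 : ZMod 2)) = 1 from rfl, map_one, map_one, map_one]
  · exact g2_ofAdd_one

lemma left_inv_hom : ∀ y, gmap (F y) = y := by
  have key : (gmap.comp F).comp Abelianization.of = (MonoidHom.id _).comp Abelianization.of := by
    refine SemidirectProduct.hom_ext ?_ ?_
    · refine MonoidHom.ext fun x => ?_
      show gmap (F (Abelianization.of (SemidirectProduct.inl x))) =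
        Abelianization.of (SemidirectProduct.inl x)
      rw [show F (Abelianization.of (SemidirectProduct.inl x)) = fG (SemidirectProduct.inl x)
            from Abelianization.lift_apply_of _ _]
      simp only [fG, SemidirectProduct.lift_inl]
      show gmap (Multiplicative.ofAdd (x.toAdd.1 + x.toAdd.2), 1) = _
      simp only [gmap, MonoidHom.coprod_apply, map_one, mul_one]
      show eElt ^ (x.toAdd.1 + x.toAdd.2) = _
      rw [← of_inl_eq]
      rfl
    · refine MonoidHom.ext fun c => ?_
      show gmap (F (Abelianization.of (SemidirectProduct.inr c))) =
        Abelianization.of (SemidirectProduct.inr c)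
      rw [show F (Abelianization.of (SemidirectProduct.inr c)) = fG (SemidirectProduct.inr c)
            from Abelianization.lift_apply_of _ _]
      simp only [fG, SemidirectProduct.lift_inr]
      show gmap ((1 : Multiplicative ℤ), c) = _
      simp only [gmap, MonoidHom.coprod_apply, map_one, one_mul, g2_eq]
  have := Abelianization.hom_ext _ _ key
  intro y
  exact DFunLike.congr_fun this y

lemma right_inv_hom : ∀ p, F (gmap p) = p := by
  rintro ⟨n, c⟩
  rw [show gmap (n, c) = eElt ^ n.toAdd * g2 c from rfl, map_mul, map_zpow]
  have hFe : F eElt = (Multiplicative.ofAdd (1 : ℤ), 1) := rfl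
  have hFg2 : F (g2 c) = (1, c) := by
    rcases zmod2_cases c with h | h <;> subst h
    · rw [show (Multiplicative.ofAdd (0 : ZMod 2)) = 1 from rfl, map_one, map_one]; rfl
    · rfl
  rw [hFe, hFg2]
  refine Prod.ext ?_ (by simp)
  show (Multiplicative.ofAdd (1 : ℤ)) ^ n.toAdd * 1 = n
  rw [mul_one, ← ofAdd_zsmul, smul_eq_mul, mul_one]
  rfl

theorem abelianization_semidirect_swap :
    Nonempty
      (Abelianization (SemidirectProduct (Multiplicative (ℤ × ℤ))
          (Multiplicative (ZMod 2)) swapAction) ≃*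
        Multiplicative ℤ × Multiplicative (ZMod 2)) := by
  exact ⟨{ toFun := F, invFun := gmap, left_inv := left_inv_hom, right_inv := right_inv_hom,
           map_mul' := F.map_mul }⟩
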